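/- Let R_n(q) = Σ_{σ ∈ I_n} q^{ℓ̂(σ)} where I_n is the set of involutions in S_n and ℓ̂(σ) = (ℓ(σ)+c(σ))/2 with ℓ the inversion count and c the number of 2-cycles. Then R_n(q) = R_{n-1}(q) + q·[n-1]_q·R_{n-2}(q) for n ≥ 2, where [m]_q = 1 + q + ... + q^{m-1}. -/

import Mathlib

open Finset Polynomial

/-- Number of inversions of `σ`. -/
def ell {n : ℕ} (σ : Equiv.Perm (Fin n)) : ℕ :=
  (Finset.univ.filter (fun p : Fin n × Fin n => p.1 < p.2 ∧ σ p.2 < σ p.1)).card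

/-- Number of 2-cycles of `σ`. -/
def cyc {n : ℕ} (σ : Equiv.Perm (Fin n)) : ℕ :=
  (Finset.univ.filter (fun i : Fin n => i < σ i)).card

/-- `ℓ̂(σ) = (ℓ(σ) + c(σ))/2`. -/
def lhat {n : ℕ} (σ : Equiv.Perm (Fin n)) : ℕ := (ell σ + cyc σ) / 2

/-- The `q`-integer `[m]_q = 1 + q + ⋯ + q^{m-1}`. -/
noncomputable def qint (m : ℕ) : Polynomial ℤ := ∑ i ∈ Finset.range m, X ^ i

/-- `R_n(q) = Σ_{σ ∈ I_n} q^{ℓ̂(σ)}`, summing over involutions of `S_n`. -/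
noncomputable def R (n : ℕ) : Polynomial ℤ :=
  ∑ σ ∈ Finset.univ.filter (fun σ : Equiv.Perm (Fin n) => σ * σ = 1), X ^ lhat σ

open Equiv

section Aux

variable {m : ℕ}

/-- Case A: extend a permutation of `Fin (m+1)` by fixing `0`. -/
def Phi0 (τ : Perm (Fin (m + 1))) : Perm (Fin (m + 2)) :=
  Equiv.Perm.decomposeFin.symm (0, τ)

@[simp] lemma Phi0_zero (τ : Perm (Fin (m + 1))) : Phi0 τ 0 = 0 :=
  Equiv.Perm.decomposeFin_symm_apply_zero _ _

@[simp] lemma Phi0_succ (τ : Perm (Fin (m + 1))) (i : Fin (m + 1)) :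
    Phi0 τ i.succ = (τ i).succ := by
  simp [Phi0, Equiv.Perm.decomposeFin_symm_apply_succ]

/-- Embedding of the `m` non-special positions into `Fin (m+2)`. -/
def gg (k : Fin (m + 1)) (j : Fin m) : Fin (m + 2) := (k.succAbove j).succ

lemma gg_strictMono (k : Fin (m + 1)) : StrictMono (gg k) := fun _ _ h => by
  simpa [gg, Fin.succ_lt_succ_iff] using (Fin.succAbove_lt_succAbove_iff (p := k)).2 h

lemma gg_inj (k : Fin (m + 1)) : Function.Injective (gg k) :=
  (gg_strictMono k).injective

@[simp] lemma gg_lt_gg_iff {k : Fin (m + 1)} {i j : Fin m} : gg k i < gg k j ↔ i < j :=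
  (gg_strictMono k).lt_iff_lt

lemma gg_ne_zero (k : Fin (m + 1)) (j : Fin m) : gg k j ≠ 0 := Fin.succ_ne_zero _

lemma gg_pos (k : Fin (m + 1)) (j : Fin m) : 0 < gg k j := Fin.succ_pos _

lemma gg_ne_ksucc (k : Fin (m + 1)) (j : Fin m) : gg k j ≠ k.succ := fun h =>
  Fin.succAbove_ne k j (Fin.succ_injective _ h)

lemma gg_lt_ksucc_iff {k : Fin (m + 1)} {j : Fin m} :
    gg k j < k.succ ↔ j.castSucc < k := by
  rw [gg, Fin.succ_lt_succ_iff, Fin.succAbove_lt_iff_castSucc_lt]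

/-- Auxiliary permutation of `Fin (m+1)` fixing `k` and acting as `τ` elsewhere. -/
def EE (k : Fin (m + 1)) (τ : Perm (Fin m)) : Perm (Fin (m + 1)) :=
  ((finSuccEquiv' k).symm).permCongr τ.optionCongr

@[simp] lemma EE_k (k : Fin (m + 1)) (τ : Perm (Fin m)) : EE k τ k = k := by
  simp [EE, Equiv.permCongr_apply, finSuccEquiv'_at, finSuccEquiv'_symm_none]

@[simp] lemma EE_succAbove (k : Fin (m + 1)) (τ : Perm (Fin m)) (j : Fin m) :
    EE k τ (k.succAbove j) = k.succAbove (τ j) := by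
  simp [EE, Equiv.permCongr_apply, finSuccEquiv'_succAbove, finSuccEquiv'_symm_some]

/-- Case B: the involution-extension sending `0 ↔ k+1` and acting as `τ` elsewhere. -/
def Phi (k : Fin (m + 1)) (τ : Perm (Fin m)) : Perm (Fin (m + 2)) :=
  Equiv.Perm.decomposeFin.symm (k.succ, EE k τ)

@[simp] lemma Phi_zero (k : Fin (m + 1)) (τ : Perm (Fin m)) : Phi k τ 0 = k.succ :=
  Equiv.Perm.decomposeFin_symm_apply_zero _ _

@[simp] lemma Phi_ksucc (k : Fin (m + 1)) (τ : Perm (Fin m)) : Phi k τ k.succ = 0 := by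
  rw [Phi, Equiv.Perm.decomposeFin_symm_apply_succ, EE_k]
  exact Equiv.swap_apply_right _ _

@[simp] lemma Phi_gg (k : Fin (m + 1)) (τ : Perm (Fin m)) (j : Fin m) :
    Phi k τ (gg k j) = gg k (τ j) := by
  rw [Phi, gg, Equiv.Perm.decomposeFin_symm_apply_succ, EE_succAbove]
  exact Equiv.swap_apply_of_ne_of_ne (gg_ne_zero k (τ j)) (gg_ne_ksucc k (τ j))

lemma cases3 (k : Fin (m + 1)) (x : Fin (m + 2)) :
    x = 0 ∨ x = k.succ ∨ ∃ j, x = gg k j := by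
  rcases Fin.eq_zero_or_eq_succ x with h | ⟨i, rfl⟩
  · exact Or.inl h
  · by_cases hik : i = k
    · exact Or.inr (Or.inl (by rw [hik]))
    · obtain ⟨j, hj⟩ := Fin.exists_succAbove_eq hik
      exact Or.inr (Or.inr ⟨j, by rw [gg, hj]⟩)

end Aux

section Aux2
open Equiv
variable {m : ℕ}

lemma Phi0_inv_iff (τ : Perm (Fin (m + 1))) : Phi0 τ * Phi0 τ = 1 ↔ τ * τ = 1 := by
  constructor
  · intro h
    refine Equiv.ext fun i => ?_
    have := Equiv.ext_iff.1 h i.succ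
    simp only [Equiv.Perm.mul_apply, Phi0_succ, Equiv.Perm.one_apply] at this ⊢
    exact Fin.succ_injective _ this
  · intro h
    refine Equiv.ext fun x => ?_
    rcases Fin.eq_zero_or_eq_succ x with rfl | ⟨i, rfl⟩
    · simp
    · have : τ (τ i) = i := Equiv.ext_iff.1 h i
      simp [Equiv.Perm.mul_apply, this]

lemma Phi_inv_iff (k : Fin (m + 1)) (τ : Perm (Fin m)) :
    Phi k τ * Phi k τ = 1 ↔ τ * τ = 1 := by
  constructor
  · intro h
    refine Equiv.ext fun j => ?_
    have := Equiv.ext_iff.1 h (gg k j)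
    simp only [Equiv.Perm.mul_apply, Phi_gg, Equiv.Perm.one_apply] at this ⊢
    exact gg_inj k this
  · intro h
    refine Equiv.ext fun x => ?_
    rcases cases3 k x with rfl | rfl | ⟨j, rfl⟩
    · simp
    · simp
    · have : τ (τ j) = j := Equiv.ext_iff.1 h j
      simp [Equiv.Perm.mul_apply, this]

lemma optionCongr_removeNone' {α : Type*} (E : Equiv.Perm (Option α)) (h : E none = none) :
    Equiv.optionCongr (Equiv.removeNone E) = E := by
  refine Equiv.ext fun x => ?_
  cases x with
  | none => simp [h]
  | some a =>
    have hx : ∃ x', E (some a) = some x' := by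
      rcases hx : E (some a) with _ | b
      · exact absurd (E.injective (hx.trans h.symm)) (by simp)
      · exact ⟨b, rfl⟩
    have := Equiv.removeNone_some E hx
    simpa using this

lemma Phi_inj : Function.Injective
    (fun p : Fin (m + 1) × Perm (Fin m) => Phi p.1 p.2) := by
  rintro ⟨k, τ⟩ ⟨k', τ'⟩ h
  simp only at h
  have hk : k = k' := by
    have := congrArg (fun σ : Perm (Fin (m+2)) => σ 0) h
    simpa [Fin.succ_inj] using this
  subst hk
  have h2 : (k.succ, EE k τ) = (k.succ, EE k τ') :=
    Equiv.Perm.decomposeFin.symm.injective h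
  have h3 : EE k τ = EE k τ' := congrArg Prod.snd h2
  have h4 : τ.optionCongr = τ'.optionCongr :=
    ((finSuccEquiv' k).symm.permCongr).injective h3
  have := Equiv.optionCongr_injective h4
  simp [this]

lemma Phi_surj (σ : Perm (Fin (m + 2))) (h1 : σ * σ = 1) (h0 : σ 0 ≠ 0) :
    ∃ k τ, Phi k τ = σ := by
  have hσ' : Equiv.Perm.decomposeFin.symm
      ((Equiv.Perm.decomposeFin σ).1, (Equiv.Perm.decomposeFin σ).2) = σ := by
    simpa using Equiv.symm_apply_apply Equiv.Perm.decomposeFin σ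
  set p := (Equiv.Perm.decomposeFin σ).1 with hpdef
  set e := (Equiv.Perm.decomposeFin σ).2 with hedef
  have hp0 : σ 0 = p := by
    conv_lhs => rw [← hσ']
    exact Equiv.Perm.decomposeFin_symm_apply_zero _ _
  have hpne : p ≠ 0 := hp0 ▸ h0
  set k := p.pred hpne with hkdef
  have hks : k.succ = p := Fin.succ_pred p hpne
  have hσp : σ p = 0 := by
    have := Equiv.ext_iff.1 h1 0
    simpa [Equiv.Perm.mul_apply, hp0] using this
  have hek : e k = k := by
    have h2 : σ k.succ = Equiv.swap 0 p ((e k).succ) := by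
      conv_lhs => rw [← hσ']
      exact Equiv.Perm.decomposeFin_symm_apply_succ _ _ _
    rw [hks, hσp] at h2
    have h3 : (e k).succ = Equiv.swap 0 p 0 := by
      have := congrArg (Equiv.swap 0 p) h2
      simpa [Equiv.swap_apply_self] using this.symm
    rw [Equiv.swap_apply_left] at h3
    exact Fin.succ_injective _ (h3.trans hks.symm)
  set Eo := (finSuccEquiv' k).permCongr e with hEo
  have hEnone : Eo none = none := by
    simp [hEo, Equiv.permCongr_apply, finSuccEquiv'_symm_none, hek, finSuccEquiv'_at]
  refine ⟨k, Equiv.removeNone Eo, ?_⟩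
  have hoc : Equiv.optionCongr (Equiv.removeNone Eo) = Eo := optionCongr_removeNone' _ hEnone
  have hEE : EE k (Equiv.removeNone Eo) = e := by
    rw [EE, hoc, hEo]
    refine Equiv.ext fun x => ?_
    simp [Equiv.permCongr_apply]
  rw [Phi, hEE, hks, hσ']

end Aux2

section Stats
open Equiv
variable {m : ℕ}

lemma cyc_Phi0 (τ : Perm (Fin (m + 1))) : cyc (Phi0 τ) = cyc τ := by
  unfold cyc
  rw [show (Finset.univ.filter (fun i : Fin (m+2) => i < Phi0 τ i)) =
      (Finset.univ.filter (fun i : Fin (m+1) => i < τ i)).image Fin.succ from ?_]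
  · exact Finset.card_image_of_injective _ (Fin.succ_injective _)
  · ext x
    rcases Fin.eq_zero_or_eq_succ x with rfl | ⟨i, rfl⟩
    · simp [Fin.succ_ne_zero]
    · simp [Fin.succ_lt_succ_iff, Fin.succ_inj]

lemma ell_Phi0 (τ : Perm (Fin (m + 1))) : ell (Phi0 τ) = ell τ := by
  unfold ell
  rw [show (Finset.univ.filter (fun p : Fin (m+2) × Fin (m+2) =>
        p.1 < p.2 ∧ Phi0 τ p.2 < Phi0 τ p.1)) =
      (Finset.univ.filter (fun p : Fin (m+1) × Fin (m+1) => p.1 < p.2 ∧ τ p.2 < τ p.1)).image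
        (fun p => (p.1.succ, p.2.succ)) from ?_]
  · refine Finset.card_image_of_injective _ ?_
    rintro ⟨a, b⟩ ⟨c, d⟩ h
    simp only [Prod.mk.injEq, Fin.succ_inj] at h
    exact Prod.ext h.1 h.2
  · ext ⟨a, b⟩
    rcases Fin.eq_zero_or_eq_succ a with rfl | ⟨i, rfl⟩ <;>
      rcases Fin.eq_zero_or_eq_succ b with rfl | ⟨j, rfl⟩
    · simp [Fin.succ_ne_zero]
    · simp [Fin.not_lt_zero, Fin.succ_ne_zero]
    · simp [Fin.not_lt_zero, Fin.succ_ne_zero]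
    · simp [Fin.succ_lt_succ_iff, Fin.succ_inj]

end Stats

section Stats2
open Equiv
variable {m : ℕ}

lemma cyc_Phi (k : Fin (m + 1)) (τ : Perm (Fin m)) : cyc (Phi k τ) = cyc τ + 1 := by
  unfold cyc
  rw [show (Finset.univ.filter (fun i : Fin (m+2) => i < Phi k τ i)) =
      insert 0 ((Finset.univ.filter (fun j : Fin m => j < τ j)).image (gg k)) from ?_]
  · rw [Finset.card_insert_of_notMem (by simp [eq_comm, gg_ne_zero]),
      Finset.card_image_of_injective _ (gg_inj k)]
  · ext x
    rcases cases3 k x with rfl | rfl | ⟨j, rfl⟩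
    · simp [Fin.succ_pos]
    · simp only [Finset.mem_filter, Finset.mem_univ, true_and, Finset.mem_insert,
        Finset.mem_image]
      rw [Phi_ksucc]
      constructor
      · intro h; exact absurd h (Fin.not_lt_zero _)
      · rintro (h | ⟨j, _, hj⟩)
        · exact absurd h (Fin.succ_ne_zero k)
        · exact absurd hj (gg_ne_ksucc k j)
    · simp [gg_ne_zero, Function.Injective.eq_iff (gg_inj k), eq_comm]

/-- number of `j : Fin m` with `j < k` (as naturals) is `k`. -/
lemma card_below (k : Fin (m + 1)) :
    (Finset.univ.filter (fun j : Fin m => j.castSucc < k)).card = (k : ℕ) := by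
  rw [show (Finset.univ.filter (fun j : Fin m => j.castSucc < k)) =
      (Finset.range (k : ℕ)).attachFin (fun a ha => lt_of_lt_of_le (Finset.mem_range.1 ha)
        (Nat.lt_succ_iff.1 k.isLt)) from ?_]
  · rw [Finset.card_attachFin, Finset.card_range]
  · ext j
    simp [Fin.lt_def]

lemma card_below_perm (k : Fin (m + 1)) (τ : Perm (Fin m)) :
    (Finset.univ.filter (fun j : Fin m => (τ j).castSucc < k)).card = (k : ℕ) := by
  rw [← card_below k]
  apply Finset.card_bij (fun a _ => τ a)
  · intro a ha
    simp only [Finset.mem_filter, Finset.mem_univ, true_and] at ha ⊢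
    exact ha
  · intro a _ b _ h
    exact τ.injective h
  · intro b hb
    simp only [Finset.mem_filter, Finset.mem_univ, true_and] at hb ⊢
    exact ⟨τ.symm b, by simpa using hb, by simp⟩

end Stats2

section Stats3
open Equiv
variable {m : ℕ}

lemma ell_Phi (k : Fin (m + 1)) (τ : Perm (Fin m)) :
    ell (Phi k τ) = ell τ + 2 * (k : ℕ) + 1 := by
  classical
  have h1 : ∀ j : Fin m, (0 : Fin (m+2)) ≠ gg k j := fun j => (gg_ne_zero k j).symm
  have h2 : ∀ j : Fin m, k.succ ≠ gg k j := fun j => (gg_ne_ksucc k j).symm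
  have h3 : (0 : Fin (m+2)) ≠ k.succ := (Fin.succ_ne_zero k).symm
  unfold ell
  set A1 : Finset (Fin (m+2) × Fin (m+2)) := {((0 : Fin (m+2)), k.succ)} with hA1
  set A2 := (Finset.univ.filter (fun j : Fin m => (τ j).castSucc < k)).image
      (fun j => ((0 : Fin (m+2)), gg k j)) with hA2
  set A3 := (Finset.univ.filter (fun i : Fin m => i.castSucc < k)).image
      (fun i => (gg k i, k.succ)) with hA3
  set A4 := (Finset.univ.filter (fun p : Fin m × Fin m => p.1 < p.2 ∧ τ p.2 < τ p.1)).image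
      (fun p => (gg k p.1, gg k p.2)) with hA4
  have hset : Finset.univ.filter (fun p : Fin (m+2) × Fin (m+2) =>
      p.1 < p.2 ∧ Phi k τ p.2 < Phi k τ p.1) = ((A1 ∪ A2) ∪ A3) ∪ A4 := by
    ext ⟨a, b⟩
    simp only [hA1, hA2, hA3, hA4, Finset.mem_union, Finset.mem_filter, Finset.mem_univ,
      true_and, Finset.mem_image, Finset.mem_singleton, Prod.mk.injEq, Prod.exists]
    rcases cases3 k a with rfl | rfl | ⟨i, rfl⟩ <;>
      rcases cases3 k b with rfl | rfl | ⟨j, rfl⟩ <;>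
      simp [h1, h2, h3, Fin.succ_ne_zero, gg_ne_zero, gg_ne_ksucc, Fin.succ_pos,
        Fin.not_lt_zero, gg_lt_ksucc_iff, gg_pos, (gg_inj k).eq_iff]
  have d1 : Disjoint A1 A2 := by
    simp only [Finset.disjoint_left, hA1, hA2, Finset.mem_singleton, Finset.mem_image]
    rintro x rfl ⟨j, _, hj⟩
    exact h2 j (congrArg Prod.snd hj).symm
  have d2 : Disjoint (A1 ∪ A2) A3 := by
    rw [Finset.disjoint_left]
    rintro x hx hx3
    simp only [hA3, Finset.mem_image] at hx3
    obtain ⟨i, _, hi⟩ := hx3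
    simp only [hA1, hA2, Finset.mem_union, Finset.mem_singleton, Finset.mem_image] at hx
    rcases hx with rfl | ⟨j, _, hj⟩
    · exact h1 i (congrArg Prod.fst hi).symm
    · rw [← hj] at hi
      exact h1 i ((congrArg Prod.fst hi).symm.trans rfl) |>.elim
  have d3 : Disjoint ((A1 ∪ A2) ∪ A3) A4 := by
    rw [Finset.disjoint_left]
    rintro x hx hx4
    simp only [hA4, Finset.mem_image, Prod.exists] at hx4
    obtain ⟨p1, p2, _, hp⟩ := hx4
    simp only [hA1, hA2, hA3, Finset.mem_union, Finset.mem_singleton, Finset.mem_image] at hx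
    rcases hx with (rfl | ⟨j, _, hj⟩) | ⟨i, _, hi⟩
    · exact h2 p2 (congrArg Prod.snd hp).symm
    · rw [← hj] at hp
      exact h1 p1 (congrArg Prod.fst hp).symm
    · rw [← hi] at hp
      exact h2 p2 (congrArg Prod.snd hp).symm
  rw [hset, Finset.card_union_of_disjoint d3, Finset.card_union_of_disjoint d2,
    Finset.card_union_of_disjoint d1]
  have c1 : A1.card = 1 := Finset.card_singleton _
  have c2 : A2.card = (k : ℕ) := by
    rw [hA2, Finset.card_image_of_injective _ (fun a b h => gg_inj k (congrArg Prod.snd h))]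
    exact card_below_perm k τ
  have c3 : A3.card = (k : ℕ) := by
    rw [hA3, Finset.card_image_of_injective _ (fun a b h => gg_inj k (congrArg Prod.fst h))]
    exact card_below k
  have c4 : A4.card = ell τ := by
    rw [hA4, Finset.card_image_of_injective _ ?_]
    · rfl
    · rintro ⟨a, b⟩ ⟨c, d⟩ h
      simp only [Prod.mk.injEq] at h
      exact Prod.ext (gg_inj k h.1) (gg_inj k h.2)
  rw [c1, c2, c3, c4]
  show 1 + (k:ℕ) + (k:ℕ) + ell τ = ell τ + 2 * (k:ℕ) + 1
  omega

end Stats3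

section Assemble
open Equiv
variable {m : ℕ}

lemma lhat_Phi0 (τ : Perm (Fin (m+1))) : lhat (Phi0 τ) = lhat τ := by
  unfold lhat; rw [ell_Phi0, cyc_Phi0]

lemma lhat_Phi (k : Fin (m+1)) (τ : Perm (Fin m)) :
    lhat (Phi k τ) = lhat τ + ((k : ℕ) + 1) := by
  unfold lhat
  rw [ell_Phi, cyc_Phi]
  have h : ell τ + 2 * (k:ℕ) + 1 + (cyc τ + 1) = ell τ + cyc τ + 2 * ((k:ℕ) + 1) := by ring
  rw [h, Nat.add_mul_div_left _ _ (by norm_num : (0:ℕ) < 2)]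

lemma Phi0_surj (σ : Perm (Fin (m + 2))) (h0 : σ 0 = 0) : ∃ τ, Phi0 τ = σ := by
  have hσ' : Equiv.Perm.decomposeFin.symm
      ((Equiv.Perm.decomposeFin σ).1, (Equiv.Perm.decomposeFin σ).2) = σ := by
    simpa using Equiv.symm_apply_apply Equiv.Perm.decomposeFin σ
  have hp0 : σ 0 = (Equiv.Perm.decomposeFin σ).1 := by
    conv_lhs => rw [← hσ']
    exact Equiv.Perm.decomposeFin_symm_apply_zero _ _
  refine ⟨(Equiv.Perm.decomposeFin σ).2, ?_⟩
  rw [Phi0, show (0 : Fin (m+2)) = (Equiv.Perm.decomposeFin σ).1 from h0 ▸ hp0, hσ']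

lemma sumA (m : ℕ) :
    ∑ σ ∈ (Finset.univ.filter (fun σ : Perm (Fin (m+2)) => σ * σ = 1)).filter
      (fun σ => σ 0 = 0), (X : Polynomial ℤ) ^ lhat σ = R (m + 1) := by
  rw [R]
  refine (Finset.sum_bij (fun (τ : Perm (Fin (m+1))) (_ : τ ∈ Finset.univ.filter
      (fun τ : Perm (Fin (m+1)) => τ * τ = 1)) => Phi0 τ) ?_ ?_ ?_ ?_).symm
  · intro τ hτ
    simp only [Finset.mem_filter, Finset.mem_univ, true_and] at hτ ⊢
    exact ⟨(Phi0_inv_iff τ).2 hτ, Phi0_zero τ⟩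
  · intro τ _ τ' _ h
    have := Equiv.Perm.decomposeFin.symm.injective h
    exact congrArg Prod.snd this
  · intro σ hσ
    simp only [Finset.mem_filter, Finset.mem_univ, true_and] at hσ
    obtain ⟨τ, hτ⟩ := Phi0_surj σ hσ.2
    refine ⟨τ, ?_, hτ⟩
    simp only [Finset.mem_filter, Finset.mem_univ, true_and]
    exact (Phi0_inv_iff τ).1 (hτ ▸ hσ.1)
  · intro τ _
    rw [lhat_Phi0]

lemma sumB (m : ℕ) :
    ∑ σ ∈ (Finset.univ.filter (fun σ : Perm (Fin (m+2)) => σ * σ = 1)).filter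
      (fun σ => ¬ σ 0 = 0), (X : Polynomial ℤ) ^ lhat σ
      = X * qint (m + 1) * R m := by
  have hstep : ∑ σ ∈ (Finset.univ.filter (fun σ : Perm (Fin (m+2)) => σ * σ = 1)).filter
      (fun σ => ¬ σ 0 = 0), (X : Polynomial ℤ) ^ lhat σ
      = ∑ p ∈ (Finset.univ : Finset (Fin (m+1) × Perm (Fin m))).filter
          (fun p => p.2 * p.2 = 1), (X : Polynomial ℤ) ^ (lhat p.2 + ((p.1 : ℕ) + 1)) := by
    refine (Finset.sum_bij (fun (p : Fin (m+1) × Perm (Fin m)) (_ : p ∈ _) =>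
        Phi p.1 p.2) ?_ ?_ ?_ ?_).symm
    · rintro ⟨k, τ⟩ hp
      simp only [Finset.mem_filter, Finset.mem_univ, true_and] at hp ⊢
      exact ⟨(Phi_inv_iff k τ).2 hp, by simp [Fin.succ_ne_zero]⟩
    · rintro p _ p' _ h
      exact Phi_inj h
    · intro σ hσ
      simp only [Finset.mem_filter, Finset.mem_univ, true_and] at hσ
      obtain ⟨k, τ, hkτ⟩ := Phi_surj σ hσ.1 hσ.2
      refine ⟨(k, τ), ?_, hkτ⟩
      simp only [Finset.mem_filter, Finset.mem_univ, true_and]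
      exact (Phi_inv_iff k τ).1 (hkτ ▸ hσ.1)
    · rintro ⟨k, τ⟩ _
      rw [lhat_Phi]
  rw [hstep]
  have hprod : (Finset.univ : Finset (Fin (m+1) × Perm (Fin m))).filter (fun p => p.2 * p.2 = 1)
      = (Finset.univ : Finset (Fin (m+1))) ×ˢ
        (Finset.univ.filter fun τ : Perm (Fin m) => τ * τ = 1) := by
    ext ⟨k, τ⟩; simp
  rw [hprod, Finset.sum_product]
  have inner : ∀ k : Fin (m+1),
      ∑ τ ∈ Finset.univ.filter (fun τ : Perm (Fin m) => τ * τ = 1),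
        (X : Polynomial ℤ) ^ (lhat τ + ((k : ℕ) + 1))
      = X ^ ((k : ℕ) + 1) * R m := by
    intro k
    rw [R, Finset.mul_sum]
    refine Finset.sum_congr rfl fun τ _ => ?_
    rw [pow_add, mul_comm]
  rw [Finset.sum_congr rfl (fun k _ => inner k), ← Finset.sum_mul]
  congr 1
  rw [qint, Finset.mul_sum]
  rw [Fin.sum_univ_eq_sum_range (fun i => (X : Polynomial ℤ) ^ (i + 1))]
  refine Finset.sum_congr rfl fun i _ => ?_
  rw [pow_succ, mul_comm]

theorem R_recurrence (n : ℕ) (hn : 2 ≤ n) :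
    R n = R (n - 1) + X * qint (n - 1) * R (n - 2) := by
  obtain ⟨m, rfl⟩ : ∃ m, n = m + 2 := ⟨n - 2, by omega⟩
  show R (m + 2) = R (m + 2 - 1) + X * qint (m + 2 - 1) * R (m + 2 - 2)
  have e1 : m + 2 - 1 = m + 1 := rfl
  have e2 : m + 2 - 2 = m := rfl
  rw [e1, e2, R]
  rw [← Finset.sum_filter_add_sum_filter_not
    (Finset.univ.filter fun σ : Perm (Fin (m+2)) => σ * σ = 1) (fun σ => σ 0 = 0)]
  rw [sumA m, sumB m]

end Assemble
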